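/- Let F be a field of characteristic different from 2, let k ≥ 3, let b, p ∈ M_k(F), and let s, t ≥ 0 be fixed integers. Suppose that [x₁,x₂]^s (b[x₁,x₂] + [p,[x₁,x₂]]) [x₁,x₂]^t ∈ Z(M_k(F)) for all x₁, x₂ ∈ M_k(F). Then b and p are scalar matrices, i.e., b, p ∈ F·I_k; in particular the map x ↦ bx + [p,x] equals x ↦ λx for some λ ∈ F. -/

import Mathlib

open Matrix

/-- Key extraction lemma: for `c = α E_ij + β E_ji` with `αβ ≠ 0`, the middle
factor `M = bc + [p,c]` vanishes on the `{i,j}` corner. -/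
lemma stmt8_corner {F : Type*} [Field F] {k : ℕ}
    (b p : Matrix (Fin k) (Fin k) F) (s t : ℕ)
    (h : ∀ x₁ x₂ : Matrix (Fin k) (Fin k) F,
      ∀ y : Matrix (Fin k) (Fin k) F,
        ((x₁ * x₂ - x₂ * x₁) ^ s *
            (b * (x₁ * x₂ - x₂ * x₁) +
              (p * (x₁ * x₂ - x₂ * x₁) - (x₁ * x₂ - x₂ * x₁) * p)) *
            (x₁ * x₂ - x₂ * x₁) ^ t) * y =
          y * ((x₁ * x₂ - x₂ * x₁) ^ s *
            (b * (x₁ * x₂ - x₂ * x₁) +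
              (p * (x₁ * x₂ - x₂ * x₁) - (x₁ * x₂ - x₂ * x₁) * p)) *
            (x₁ * x₂ - x₂ * x₁) ^ t))
    {i j l : Fin k} (hij : i ≠ j) (hli : l ≠ i) (hlj : l ≠ j)
    (α β : F) (ha : α ≠ 0) (hb : β ≠ 0) :
    (β * (b i j + p i j) - α * p j i = 0) ∧
    (b i i + p i i - p j j = 0) ∧
    (b j j + p j j - p i i = 0) ∧
    (α * (b j i + p j i) - β * p i j = 0) := by
  set A := Matrix.single i j (1 : F) with hA
  set B := Matrix.single j i (1 : F) with hB
  set c : Matrix (Fin k) (Fin k) F := α • A + β • B with hc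
  set M : Matrix (Fin k) (Fin k) F := b * c + (p * c - c * p) with hM
  set E : Matrix (Fin k) (Fin k) F := c ^ s * M * c ^ t with hEdef
  -- c is a commutator
  have hcomm : (Matrix.single i i (1:F)) * (α • A - β • B)
      - (α • A - β • B) * Matrix.single i i (1:F) = c := by
    rw [hc, hA, hB]
    rw [mul_sub, sub_mul, Matrix.mul_smul, Matrix.mul_smul, Matrix.smul_mul, Matrix.smul_mul]
    simp only [Matrix.single_mul_single_same, Matrix.single_mul_single_of_ne (1:F) i i j hij,
      Matrix.single_mul_single_of_ne (1:F) i j i hij.symm, mul_one, smul_zero, sub_zero, zero_sub,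
      sub_neg_eq_add]
  have hE : ∀ y, E * y = y * E := by
    intro y
    have := h (Matrix.single i i (1:F)) (α • A - β • B) y
    rw [hcomm] at this
    exact this
  -- row and column l of c vanish
  have hrow : ∀ r, c l r = 0 := by
    intro r
    simp [hc, hA, hB, Ne.symm hli, Ne.symm hlj]
  have hcol : ∀ r, c r l = 0 := by
    intro r
    simp [hc, hA, hB, Ne.symm hli, Ne.symm hlj]
  have hrowP : ∀ (X : Matrix (Fin k) (Fin k) F) r, (c * X) l r = 0 := by
    intro X r
    rw [Matrix.mul_apply]
    exact Finset.sum_eq_zero fun m _ => by rw [hrow, zero_mul]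
  have hcolP : ∀ (X : Matrix (Fin k) (Fin k) F) r, (X * c) r l = 0 := by
    intro X r
    rw [Matrix.mul_apply]
    exact Finset.sum_eq_zero fun m _ => by rw [hcol, mul_zero]
  -- E l l = 0
  have hcs : c ^ s * c = c * c ^ s := ((Commute.refl c).pow_left s).eq
  have hct : c * c ^ t = c ^ t * c := (((Commute.refl c).pow_left t).eq).symm
  have hE2 : E = (c ^ s * (b + p)) * (c ^ t * c) - (c * c ^ s) * (p * c ^ t) := by
    rw [hEdef, hM]
    simp only [add_mul, sub_mul, mul_add, mul_sub, mul_assoc]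
    rw [hct]
    rw [show c ^ s * (c * (p * c ^ t)) = c * (c ^ s * (p * c ^ t)) by
      rw [← mul_assoc, hcs, mul_assoc]]
    abel
  have hEll : E l l = 0 := by
    rw [hE2, Matrix.sub_apply]
    have h1 : ((c ^ s * (b + p)) * (c ^ t * c)) l l = 0 := by
      rw [Matrix.mul_apply]
      exact Finset.sum_eq_zero fun r _ => by rw [hcolP, mul_zero]
    have h2 : ((c * c ^ s) * (p * c ^ t)) l l = 0 := by
      rw [Matrix.mul_apply]
      exact Finset.sum_eq_zero fun r _ => by rw [hrowP, zero_mul]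
    rw [h1, h2, sub_zero]
  -- E = 0
  have hE0 : E = 0 := by
    ext a b'
    have h2 : (E * Matrix.single b' l (1:F)) a l = (Matrix.single b' l (1:F) * E) a l := by
      rw [hE (Matrix.single b' l (1:F))]
    rw [Matrix.mul_single_apply_same] at h2
    rcases eq_or_ne a b' with rfl | hab
    · rw [Matrix.single_mul_apply_same, hEll, mul_zero] at h2
      simpa using h2
    · rw [Matrix.single_mul_apply_of_ne _ _ _ _ _ hab] at h2
      simpa using h2
  -- powers of c
  set q : Matrix (Fin k) (Fin k) F := Matrix.single i i 1 + Matrix.single j j 1 with hq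
  have hAB : A * B = Matrix.single i i (1:F) := by
    rw [hA, hB]; simpa using Matrix.single_mul_single_same (1:F) i j i (1:F)
  have hBA : B * A = Matrix.single j j (1:F) := by
    rw [hA, hB]; simpa using Matrix.single_mul_single_same (1:F) j i j (1:F)
  have hAA : A * A = 0 := by rw [hA]; exact Matrix.single_mul_single_of_ne (1:F) i j i hij.symm 1
  have hBB : B * B = 0 := by rw [hB]; exact Matrix.single_mul_single_of_ne (1:F) j i j hij 1
  have hcc : c * c = (α * β) • q := by
    rw [hc, hq]
    rw [add_mul, mul_add, mul_add]
    rw [smul_mul_smul_comm, smul_mul_smul_comm, smul_mul_smul_comm, smul_mul_smul_comm]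
    rw [hAA, hAB, hBA, hBB, smul_zero, smul_zero, zero_add, add_zero, smul_add,
      mul_comm β α]
  have hqq : q * q = q := by
    rw [hq]
    rw [add_mul, mul_add, mul_add]
    simp only [Matrix.single_mul_single_same, Matrix.single_mul_single_of_ne (1:F) i i j hij,
      Matrix.single_mul_single_of_ne (1:F) j j i hij.symm, mul_one, add_zero, zero_add]
  have hpow : ∀ n : ℕ, c ^ (2 * n + 2) = ((α * β) ^ (n + 1)) • q := by
    intro n
    induction n with
    | zero => rw [show 2 * 0 + 2 = 2 by norm_num, pow_two, hcc, pow_one]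
    | succ m ih =>
        rw [show 2 * (m + 1) + 2 = (2 * m + 2) + 2 by ring, pow_add, ih, pow_two, hcc,
          smul_mul_smul_comm, hqq, ← pow_succ]
  -- q * M * q = 0
  have hqMq : q * M * q = 0 := by
    have h0 : c ^ (s + 2) * E * c ^ (t + 2) = 0 := by rw [hE0]; simp
    rw [hEdef] at h0
    have hre : c ^ (s + 2) * (c ^ s * M * c ^ t) * c ^ (t + 2)
        = ((α * β) ^ (s + 1) * (α * β) ^ (t + 1)) • (q * M * q) := by
      calc c ^ (s + 2) * (c ^ s * M * c ^ t) * c ^ (t + 2)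
          = (c ^ (s + 2) * c ^ s) * M * (c ^ t * c ^ (t + 2)) := by
            simp only [mul_assoc]
        _ = c ^ (2 * s + 2) * M * c ^ (2 * t + 2) := by
            rw [← pow_add, ← pow_add]
            congr 2 <;> ring
        _ = ((α * β) ^ (s + 1) * (α * β) ^ (t + 1)) • (q * M * q) := by
            rw [hpow s, hpow t]
            simp only [smul_mul_assoc, mul_smul_comm, smul_smul]
            rw [mul_comm ((α * β) ^ (t + 1))]
    rw [hre] at h0
    have hne : (α * β) ^ (s + 1) * (α * β) ^ (t + 1) ≠ 0 :=
      mul_ne_zero (pow_ne_zero _ (mul_ne_zero ha hb)) (pow_ne_zero _ (mul_ne_zero ha hb))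
    exact (smul_eq_zero.mp h0).resolve_left hne
  -- extract the corner entries of M
  have hMe : ∀ x y : Fin k, x = i ∨ x = j → y = i ∨ y = j → M x y = 0 := by
    intro x y hx hy
    have hxy : (q * M * q) x y = 0 := by rw [hqMq]; simp
    rw [hq] at hxy
    rcases hx with rfl | rfl <;> rcases hy with rfl | rfl <;>
      simpa [add_mul, mul_add, Matrix.add_apply, hij, hij.symm] using hxy
  have hMii := hMe i i (Or.inl rfl) (Or.inl rfl)
  have hMij := hMe i j (Or.inl rfl) (Or.inr rfl)
  have hMji := hMe j i (Or.inr rfl) (Or.inl rfl)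
  have hMjj := hMe j j (Or.inr rfl) (Or.inr rfl)
  simp only [hM, hc, hA, hB, Matrix.add_apply, Matrix.sub_apply, mul_add, add_mul,
    Matrix.mul_smul, Matrix.smul_mul, Matrix.smul_apply, smul_eq_mul,
    Matrix.single_mul_apply_same, Matrix.mul_single_apply_same,
    Matrix.single_mul_apply_of_ne _ _ _ _ _ hij,
    Matrix.single_mul_apply_of_ne _ _ _ _ _ hij.symm,
    Matrix.mul_single_apply_of_ne _ _ _ _ _ hij,
    Matrix.mul_single_apply_of_ne _ _ _ _ _ hij.symm,
    one_mul, mul_one, mul_zero, add_zero, zero_add] at hMii hMij hMji hMjj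
  refine ⟨by linear_combination hMii, ?_, ?_, by linear_combination hMjj⟩
  · have e2 : α * (b i i + p i i - p j j) = 0 := by linear_combination hMij
    exact (mul_eq_zero.mp e2).resolve_left ha
  · have e3 : β * (b j j + p j j - p i i) = 0 := by linear_combination hMji
    exact (mul_eq_zero.mp e3).resolve_left hb

/-- Let `char F ≠ 2`, `k ≥ 3`, `b, p ∈ M_k(F)` and `s, t ≥ 0`.
If `[x₁,x₂]^s (b[x₁,x₂] + [p,[x₁,x₂]]) [x₁,x₂]^t ∈ Z(M_k(F))` for all `x₁, x₂`,
then `b, p` are scalar matrices and `x ↦ bx + [p,x]` equals `x ↦ λx` for some `λ ∈ F`. -/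
theorem stmt_8 {F : Type*} [Field F] (hF : ringChar F ≠ 2) {k : ℕ} (hk : 3 ≤ k)
    (b p : Matrix (Fin k) (Fin k) F) (s t : ℕ)
    (h : ∀ x₁ x₂ : Matrix (Fin k) (Fin k) F,
      ∀ y : Matrix (Fin k) (Fin k) F,
        ((x₁ * x₂ - x₂ * x₁) ^ s *
            (b * (x₁ * x₂ - x₂ * x₁) +
              (p * (x₁ * x₂ - x₂ * x₁) - (x₁ * x₂ - x₂ * x₁) * p)) *
            (x₁ * x₂ - x₂ * x₁) ^ t) * y =
          y * ((x₁ * x₂ - x₂ * x₁) ^ s *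
            (b * (x₁ * x₂ - x₂ * x₁) +
              (p * (x₁ * x₂ - x₂ * x₁) - (x₁ * x₂ - x₂ * x₁) * p)) *
            (x₁ * x₂ - x₂ * x₁) ^ t)) :
    (∃ β : F, b = β • (1 : Matrix (Fin k) (Fin k) F)) ∧
    (∃ π : F, p = π • (1 : Matrix (Fin k) (Fin k) F)) ∧
    (∃ lam : F, ∀ x : Matrix (Fin k) (Fin k) F,
      b * x + (p * x - x * p) = lam • x) := by
  have h2 : (2 : F) ≠ 0 := Ring.two_ne_zero hF
  -- a third index always exists
  have hex : ∀ i j : Fin k, ∃ l : Fin k, l ≠ i ∧ l ≠ j := by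
    intro i j
    have hcard : ({i, j} : Finset (Fin k)).card ≤ 2 := by
      refine (Finset.card_insert_le i {j}).trans ?_
      simp
    have hne : (({i, j} : Finset (Fin k))ᶜ).Nonempty := by
      rw [← Finset.card_pos, Finset.card_compl, Fintype.card_fin]
      omega
    obtain ⟨l, hl⟩ := hne
    simp only [Finset.mem_compl, Finset.mem_insert, Finset.mem_singleton, not_or] at hl
    exact ⟨l, hl.1, hl.2⟩
  -- key relations
  have key : ∀ i j : Fin k, i ≠ j →
      p i j = 0 ∧ b i j = 0 ∧ b i i + p i i - p j j = 0 ∧ b j j + p j j - p i i = 0 := by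
    intro i j hij
    obtain ⟨l, hli, hlj⟩ := hex i j
    obtain ⟨e1, e2, e3, e4⟩ :=
      stmt8_corner b p s t h hij hli hlj 1 1 one_ne_zero one_ne_zero
    obtain ⟨f1, f2, f3, f4⟩ :=
      stmt8_corner b p s t h hij hli hlj 1 (-1) one_ne_zero (by norm_num)
    have hpij : p i j = 0 := by
      have : 2 * p i j = 0 := by linear_combination f4 - e4
      exact (mul_eq_zero.mp this).resolve_left h2
    have hpji : p j i = 0 := by
      have : 2 * p j i = 0 := by linear_combination - e1 - f1
      exact (mul_eq_zero.mp this).resolve_left h2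
    have hbij : b i j = 0 := by linear_combination e1 - hpij + hpji
    exact ⟨hpij, hbij, e2, e3⟩
  -- diagonal of b vanishes
  have hsum : ∀ i j : Fin k, i ≠ j → b i i + b j j = 0 := by
    intro i j hij
    obtain ⟨-, -, e2, e3⟩ := key i j hij
    linear_combination e2 + e3
  have hbd : ∀ i : Fin k, b i i = 0 := by
    intro i
    obtain ⟨j, hji, -⟩ := hex i i
    obtain ⟨l, hli, hlj⟩ := hex i j
    have s1 := hsum i j (Ne.symm hji)
    have s2 := hsum i l (Ne.symm hli)
    have s3 := hsum l j hlj
    have : 2 * b i i = 0 := by linear_combination s1 + s2 - s3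
    exact (mul_eq_zero.mp this).resolve_left h2
  -- b = 0
  have hb0 : b = 0 := by
    ext a a'
    rcases eq_or_ne a a' with rfl | haa
    · simpa using hbd a
    · simpa using (key a a' haa).2.1
  -- p is scalar
  have i0 : Fin k := ⟨0, by omega⟩
  have hpd : ∀ i : Fin k, p i i = p i0 i0 := by
    intro i
    rcases eq_or_ne i i0 with rfl | hi
    · rfl
    · obtain ⟨-, -, e2, -⟩ := key i i0 hi
      have := hbd i
      linear_combination e2 - this
  have hp0 : p = (p i0 i0) • (1 : Matrix (Fin k) (Fin k) F) := by
    ext a a'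
    rcases eq_or_ne a a' with rfl | haa
    · simp [Matrix.one_apply, hpd a]
    · simp [Matrix.one_apply, haa, (key a a' haa).1]
  refine ⟨⟨0, by simp [hb0]⟩, ⟨p i0 i0, hp0⟩, ⟨0, ?_⟩⟩
  intro x
  rw [hb0, hp0]
  simp [Matrix.smul_mul, Matrix.mul_smul]
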